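/- Let r ≥ 2 be a non-square integer, α = √r, and define Φ : ℤ → ℝ by Φ(n) = ∑_{j=0}^{r-1} {(n-j)/α + α/2}. Then sup_{n} Φ(n) + inf_{n} Φ(n) = r, where sup and inf are taken over the closure of the values (equivalently, over the orbit parameter θ ∈ [0,1)). -/

import Mathlib

open Real Finset

theorem stmt10 (r : ℕ) (hr : 2 ≤ r) (hns : ¬ IsSquare r)
    (Φ : ℤ → ℝ)
    (hΦ : ∀ n : ℤ, Φ n = ∑ j ∈ Finset.range r,
      Int.fract (((n : ℝ) - j) / Real.sqrt r + Real.sqrt r / 2))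
    (g : ℝ → ℝ)
    (hg : ∀ θ : ℝ, g θ = ∑ j ∈ Finset.range r,
      Int.fract (θ - (j : ℝ) / Real.sqrt r)) :
    (∀ n : ℤ, Φ n = g (Int.fract ((n : ℝ) / Real.sqrt r + Real.sqrt r / 2))) ∧
    sSup (g '' Set.Ico (0 : ℝ) 1) + sInf (g '' Set.Ico (0 : ℝ) 1) = r := by
  have hα : Irrational (Real.sqrt r) := irrational_sqrt_natCast_iff.mpr hns
  have hrR : (0:ℝ) < (r:ℝ) := by
    have : 0 < r := by omega
    exact_mod_cast this
  set α := Real.sqrt r with hαdef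
  have hα0 : 0 < α := Real.sqrt_pos.mpr hrR
  set G : ℝ → ℝ := fun x => ∑ j ∈ Finset.range r, Int.fract (x - (j : ℝ) / α) with hGdef
  have hgG : ∀ x, g x = G x := fun x => by rw [hg, hGdef]
  set S := g '' Set.Ico (0:ℝ) 1 with hS
  -- irrationality of differences of lattice points
  have hfne : ∀ y : ℝ, Irrational y → Int.fract y ≠ 0 := by
    intro y hy h
    refine hy.ne_int ⌊y⌋ ?_
    have := Int.floor_add_fract y
    rw [h, add_zero] at this
    exact this.symm
  have hdiff : ∀ k j : ℕ, k ≠ j → Irrational ((k:ℝ)/α - (j:ℝ)/α) := by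
    intro k j hkj
    have h1 : (k:ℝ)/α - (j:ℝ)/α = (((k:ℤ) - (j:ℤ) : ℤ):ℝ)/α := by push_cast; ring
    rw [h1]
    refine irrational_intCast_div_iff.mpr ⟨?_, hα⟩
    exact sub_ne_zero.mpr (by exact_mod_cast hkj)
  have hfpos : ∀ k j : ℕ, k ≠ j → 0 < Int.fract ((k:ℝ)/α - (j:ℝ)/α) := by
    intro k j hkj
    exact lt_of_le_of_ne (Int.fract_nonneg _) (Ne.symm (hfne _ (hdiff k j hkj)))
  -- G is invariant under integer shifts
  have hGshift : ∀ (x : ℝ) (z : ℤ), G (x + z) = G x := by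
    intro x z
    simp only [hGdef]
    refine Finset.sum_congr rfl fun j _ => ?_
    rw [show x + (z:ℝ) - (j:ℝ)/α = (x - (j:ℝ)/α) + z by ring, Int.fract_add_intCast]
  have hGfract : ∀ x : ℝ, G (Int.fract x) = G x := by
    intro x
    have h1 : Int.fract x = x + ((-⌊x⌋ : ℤ):ℝ) := by
      push_cast
      rw [← Int.self_sub_floor]
      ring
    rw [h1, hGshift]
  -- basic bounds
  have hG0 : ∀ x, 0 ≤ G x := by
    intro x
    simp only [hGdef]
    exact Finset.sum_nonneg fun j _ => Int.fract_nonneg _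
  have hGr : ∀ x, G x ≤ r := by
    intro x
    simp only [hGdef]
    calc ∑ j ∈ Finset.range r, Int.fract (x - (j : ℝ) / α)
        ≤ ∑ _j ∈ Finset.range r, (1:ℝ) :=
          Finset.sum_le_sum fun j _ => (Int.fract_lt_one _).le
      _ = r := by simp
  have hmem : ∀ x : ℝ, G x ∈ S := by
    intro x
    exact ⟨Int.fract x, ⟨Int.fract_nonneg x, Int.fract_lt_one x⟩,
      by rw [hgG]; exact hGfract x⟩
  have hSne : S.Nonempty := ⟨G 0, hmem 0⟩
  have hSbddA : BddAbove S := by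
    refine ⟨(r:ℝ), ?_⟩
    rintro v ⟨θ, _, rfl⟩
    rw [hgG]; exact hGr θ
  have hSbddB : BddBelow S := by
    refine ⟨0, ?_⟩
    rintro v ⟨θ, _, rfl⟩
    rw [hgG]; exact hG0 θ
  have hleM : ∀ x : ℝ, G x ≤ sSup S := fun x => le_csSup hSbddA (hmem x)
  have hmle : ∀ x : ℝ, sInf S ≤ G x := fun x => csInf_le hSbddB (hmem x)
  -- the reflection computation
  have hrefl : ∀ x : ℝ, G (((r:ℝ) - 1)/α - x) =
      ∑ j ∈ Finset.range r, Int.fract ((j:ℝ)/α - x) := by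
    intro x
    simp only [hGdef]
    rw [← Finset.sum_range_reflect (fun j => Int.fract ((j:ℝ)/α - x)) r]
    refine Finset.sum_congr rfl fun j hj => ?_
    have hj' : j < r := Finset.mem_range.mp hj
    have hc : ((r - 1 - j : ℕ):ℝ) = (r:ℝ) - 1 - (j:ℝ) := by
      have h1 : j ≤ r - 1 := by omega
      have h2 : 1 ≤ r := by omega
      push_cast [Nat.cast_sub h1, Nat.cast_sub h2]
      ring
    congr 1
    rw [hc]
    ring
  -- pair identity, generic case
  have hpair : ∀ x : ℝ, (∀ j ∈ Finset.range r, Int.fract (x - (j:ℝ)/α) ≠ 0) →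
      G x + G (((r:ℝ) - 1)/α - x) = r := by
    intro x hx
    rw [hrefl x]
    simp only [hGdef]
    rw [← Finset.sum_add_distrib]
    have h1 : ∀ j ∈ Finset.range r,
        Int.fract (x - (j:ℝ)/α) + Int.fract ((j:ℝ)/α - x) = 1 := by
      intro j hj
      rw [show (j:ℝ)/α - x = -(x - (j:ℝ)/α) by ring, Int.fract_neg (hx j hj)]
      ring
    rw [Finset.sum_congr rfl h1, Finset.sum_const, Finset.card_range, nsmul_eq_mul, mul_one]
  -- pair identity at lattice points
  have hpair' : ∀ k, k < r →
      G ((k:ℝ)/α) + G (((r:ℝ) - 1)/α - (k:ℝ)/α) = (r:ℝ) - 1 := by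
    intro k hk
    rw [hrefl]
    simp only [hGdef]
    rw [← Finset.sum_add_distrib]
    have h1 : ∀ j ∈ Finset.range r,
        Int.fract ((k:ℝ)/α - (j:ℝ)/α) + Int.fract ((j:ℝ)/α - (k:ℝ)/α)
          = 1 - (if j = k then (1:ℝ) else 0) := by
      intro j hj
      by_cases h : j = k
      · subst h
        simp [Int.fract_zero]
      · have hne : Int.fract ((k:ℝ)/α - (j:ℝ)/α) ≠ 0 :=
          (hfpos k j (fun hkj => h hkj.symm)).ne'
        rw [show (j:ℝ)/α - (k:ℝ)/α = -((k:ℝ)/α - (j:ℝ)/α) by ring,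
          Int.fract_neg hne, if_neg h]
        ring
    rw [Finset.sum_congr rfl h1, Finset.sum_sub_distrib, Finset.sum_const, Finset.card_range,
      Finset.sum_ite_eq' (Finset.range r) k (fun _ => (1:ℝ)),
      if_pos (Finset.mem_range.mpr hk), nsmul_eq_mul, mul_one]
  -- perturbation identity
  have hlim : ∀ k, k < r → ∀ ε : ℝ, 0 < ε → ε < 1 →
      (∀ j ∈ Finset.range r, j ≠ k → ε < Int.fract ((k:ℝ)/α - (j:ℝ)/α)) →
      G ((k:ℝ)/α - ε) = G ((k:ℝ)/α) + 1 - r * ε := by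
    intro k hk ε hε0 hε1 hεf
    simp only [hGdef]
    have hterm : ∀ j ∈ Finset.range r, Int.fract ((k:ℝ)/α - ε - (j:ℝ)/α)
        = Int.fract ((k:ℝ)/α - (j:ℝ)/α) - ε + (if j = k then (1:ℝ) else 0) := by
      intro j hj
      by_cases h : j = k
      · subst h
        have hfe : Int.fract ε = ε := Int.fract_eq_self.mpr ⟨hε0.le, hε1⟩
        rw [show (j:ℝ)/α - ε - (j:ℝ)/α = -ε by ring,
          Int.fract_neg (by rw [hfe]; exact hε0.ne'), hfe]
        simp [Int.fract_zero]
        ring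
      · have h1 : ε < Int.fract ((k:ℝ)/α - (j:ℝ)/α) := hεf j hj h
        set y := (k:ℝ)/α - (j:ℝ)/α with hy
        have h2 : (k:ℝ)/α - ε - (j:ℝ)/α = (Int.fract y - ε) + (⌊y⌋:ℝ) := by
          have := Int.fract_add_floor y
          rw [hy] at this ⊢
          linarith
        rw [h2, Int.fract_add_intCast,
          Int.fract_eq_self.mpr ⟨by linarith, by linarith [Int.fract_lt_one y]⟩, if_neg h]
        ring
    rw [Finset.sum_congr rfl hterm, Finset.sum_add_distrib, Finset.sum_sub_distrib,
      Finset.sum_const, Finset.card_range,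
      Finset.sum_ite_eq' (Finset.range r) k (fun _ => (1:ℝ)),
      if_pos (Finset.mem_range.mpr hk), nsmul_eq_mul]
    ring
  -- sup bound at lattice points
  have hsup1 : ∀ k, k < r → G ((k:ℝ)/α) + 1 ≤ sSup S := by
    intro k hk
    set T : Finset ℝ :=
      insert 1 (((Finset.range r).erase k).image
        (fun j : ℕ => Int.fract ((k:ℝ)/α - (j:ℝ)/α))) with hT
    have hTne : T.Nonempty := Finset.insert_nonempty _ _
    set δ := T.min' hTne with hδ
    have hδpos : 0 < δ := by
      rw [hδ, Finset.lt_min'_iff]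
      intro y hy
      rw [hT, Finset.mem_insert] at hy
      rcases hy with h | h
      · rw [h]; norm_num
      · obtain ⟨j, hj, rfl⟩ := Finset.mem_image.mp h
        have hjk : j ≠ k := (Finset.mem_erase.mp hj).1
        exact hfpos k j (fun hkj => hjk hkj.symm)
    have hδ1 : δ ≤ 1 := Finset.min'_le _ _ (Finset.mem_insert_self _ _)
    have hδle : ∀ j ∈ Finset.range r, j ≠ k →
        δ ≤ Int.fract ((k:ℝ)/α - (j:ℝ)/α) := by
      intro j hj hjk
      refine Finset.min'_le _ _ ?_
      rw [hT, Finset.mem_insert]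
      exact Or.inr (Finset.mem_image.mpr ⟨j, Finset.mem_erase.mpr ⟨hjk, hj⟩, rfl⟩)
    refine le_of_forall_pos_le_add fun ε hε => ?_
    set ε' := min (δ/2) (ε/r) with hε'
    have hε'0 : 0 < ε' := lt_min (by linarith) (div_pos hε hrR)
    have hε'δ : ε' < δ := lt_of_le_of_lt (min_le_left _ _) (by linarith)
    have h3 := hlim k hk ε' hε'0 (lt_of_lt_of_le hε'δ hδ1)
      (fun j hj hjk => lt_of_lt_of_le hε'δ (hδle j hj hjk))
    have h4 := hleM ((k:ℝ)/α - ε')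
    rw [h3] at h4
    have h5 : (r:ℝ) * ε' ≤ ε := by
      have := min_le_right (δ/2) (ε/r)
      calc (r:ℝ) * ε' ≤ (r:ℝ) * (ε/r) := by
            exact mul_le_mul_of_nonneg_left this hrR.le
        _ = ε := by field_simp
    linarith
  -- the two-sided bound for every θ ∈ [0,1)
  have hlb : ∀ θ ∈ Set.Ico (0:ℝ) 1,
      (r:ℝ) - sSup S ≤ G θ ∧ G θ ≤ (r:ℝ) - sInf S := by
    intro θ _
    by_cases hcase : ∀ j ∈ Finset.range r, Int.fract (θ - (j:ℝ)/α) ≠ 0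
    · have h := hpair θ hcase
      have h1 := hleM (((r:ℝ) - 1)/α - θ)
      have h2 := hmle (((r:ℝ) - 1)/α - θ)
      constructor <;> linarith
    · push_neg at hcase
      obtain ⟨k, hk, hf0⟩ := hcase
      have hkr : k < r := Finset.mem_range.mp hk
      have hz : θ = (k:ℝ)/α + ((⌊θ - (k:ℝ)/α⌋ : ℤ):ℝ) := by
        have h6 := Int.fract_add_floor (θ - (k:ℝ)/α)
        rw [hf0, zero_add] at h6
        linarith
      have hGθ : G θ = G ((k:ℝ)/α) := by rw [hz, hGshift]
      set k' := r - 1 - k with hk'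
      have hk'r : k' < r := by omega
      have hcast : ((k' : ℕ):ℝ) = (r:ℝ) - 1 - (k:ℝ) := by
        have h1 : k ≤ r - 1 := by omega
        have h2 : 1 ≤ r := by omega
        rw [hk']
        push_cast [Nat.cast_sub h1, Nat.cast_sub h2]
        ring
      have hβ : ((r:ℝ) - 1)/α - (k:ℝ)/α = ((k' : ℕ):ℝ)/α := by
        rw [hcast]; ring
      have hp := hpair' k hkr
      rw [hβ] at hp
      have h1 := hsup1 k' hk'r
      have h2 := hmle (((k' : ℕ):ℝ)/α)
      rw [hGθ]
      constructor <;> linarith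
  constructor
  · intro n
    rw [hΦ, hgG, hGfract]
    simp only [hGdef]
    refine Finset.sum_congr rfl fun j _ => ?_
    congr 1
    field_simp
    ring
  · have hM : sSup S ≤ (r:ℝ) - sInf S := by
      refine csSup_le hSne ?_
      rintro v ⟨θ, hθ, rfl⟩
      rw [hgG]
      exact (hlb θ hθ).2
    have hm : (r:ℝ) - sSup S ≤ sInf S := by
      refine le_csInf hSne ?_
      rintro v ⟨θ, hθ, rfl⟩
      rw [hgG]
      exact (hlb θ hθ).1
    linarith
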